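/- Given s > 0 and an exponent function p(·) with p_- > 0, the s-convexification (L^{p(·)})^{(s)} coincides with L^{sp(·)} as a set, and for all f ∈ L^{sp(·)}: 2^{-(1/s)max{1/p_-,1}} ‖f‖_{(L^{p(·)})^{(s)}} ≤ ‖f‖_{sp(·)} ≤ 2^{max{1/(sp_-),1}} ‖f‖_{(L^{p(·)})^{(s)}}. -/

import Mathlib

open MeasureTheory ENNReal Filter

/-- The modular of a variable Lebesgue space over a measure space. -/
noncomputable def modular {Ω : Type*} [MeasurableSpace Ω] (μ : Measure Ω)
    (p : Ω → ℝ≥0∞) (f : Ω → ℝ) : ℝ≥0∞ :=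
  (∫⁻ x in {x | p x ≠ ∞}, ENNReal.ofReal (|f x| ^ (p x).toReal) ∂μ)
    + essSup (fun x => ENNReal.ofReal |f x|) (μ.restrict {x | p x = ∞})

/-- The Luxemburg--Nakano functional associated with the modular. -/
noncomputable def luxNorm {Ω : Type*} [MeasurableSpace Ω] (μ : Measure Ω)
    (p : Ω → ℝ≥0∞) (f : Ω → ℝ) : ℝ≥0∞ :=
  sInf {lam : ℝ≥0∞ | 0 < lam ∧ lam ≠ ∞ ∧
    modular μ p (fun x => f x / lam.toReal) ≤ 1}

/-- Membership in the variable Lebesgue space `L^{p(·)}(Ω,μ)`. -/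
def memLp {Ω : Type*} [MeasurableSpace Ω] (μ : Measure Ω)
    (p : Ω → ℝ≥0∞) (f : Ω → ℝ) : Prop :=
  ∃ lam : ℝ, 0 < lam ∧ modular μ p (fun x => f x / lam) ≠ ∞

section Aux

variable {Ω : Type*} [MeasurableSpace Ω] {μ : Measure Ω}

/-- Multiplication by a positive finite constant as an order isomorphism of `ℝ≥0∞`. -/
noncomputable def VLmulIso (c : ℝ≥0∞) (h0 : c ≠ 0) (ht : c ≠ ∞) : ℝ≥0∞ ≃o ℝ≥0∞ where
  toFun x := c * x
  invFun x := x / c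
  left_inv x := by
    simp only
    rw [mul_comm, mul_div_assoc, ENNReal.div_self h0 ht, mul_one]
  right_inv x := by
    simp only
    exact ENNReal.mul_div_cancel h0 ht
  map_rel_iff' := by
    intro a b
    exact ENNReal.mul_le_mul_iff_right h0 ht

lemma VL_essInf_const_mul {c : ℝ≥0∞} (h0 : c ≠ 0) (ht : c ≠ ∞) (g : Ω → ℝ≥0∞) :
    essInf (fun x => c * g x) μ = c * essInf g μ :=
  (OrderIso.essInf_apply g μ (VLmulIso c h0 ht)).symm

lemma VL_essSup_rpow {s : ℝ} (hs : 0 < s) (g : Ω → ℝ≥0∞) :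
    essSup (fun x => g x ^ s) μ = essSup g μ ^ s := by
  simpa using (OrderIso.essSup_apply g μ (ENNReal.orderIsoRpow s hs)).symm

omit [MeasurableSpace Ω] in
lemma VL_set_eq (p : Ω → ℝ≥0∞) {s : ℝ} (hs : 0 < s) (x : Ω) :
    ENNReal.ofReal s * p x = ∞ ↔ p x = ∞ := by
  rw [ENNReal.mul_eq_top]
  simp [ENNReal.ofReal_eq_zero, hs.not_ge]

lemma VL_modular_q (μ : Measure Ω) (p : Ω → ℝ≥0∞) {s : ℝ} (hs : 0 < s) (f : Ω → ℝ) (lam : ℝ) :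
    modular μ (fun x => ENNReal.ofReal s * p x) (fun x => f x / lam)
      = (∫⁻ x in {x | p x ≠ ∞}, ENNReal.ofReal (|f x / lam| ^ (ENNReal.ofReal s * p x).toReal) ∂μ)
        + essSup (fun x => ENNReal.ofReal |f x / lam|) (μ.restrict {x | p x = ∞}) := by
  have h1 : {x | ENNReal.ofReal s * p x ≠ ∞} = {x | p x ≠ ∞} := by
    ext x; simp only [Set.mem_setOf_eq, ne_eq, VL_set_eq p hs x]
  have h2 : {x | ENNReal.ofReal s * p x = ∞} = {x | p x = ∞} := by
    ext x; exact VL_set_eq p hs x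
  rw [modular, h1, h2]

lemma VL_modular_p (μ : Measure Ω) {p : Ω → ℝ≥0∞} (hpm : Measurable p) {s : ℝ} (hs : 0 < s)
    (f : Ω → ℝ) {lam : ℝ} (hlam : 0 < lam) :
    modular μ p (fun x => |f x| ^ s / lam ^ s)
      = (∫⁻ x in {x | p x ≠ ∞}, ENNReal.ofReal (|f x / lam| ^ (ENNReal.ofReal s * p x).toReal) ∂μ)
        + (essSup (fun x => ENNReal.ofReal |f x / lam|) (μ.restrict {x | p x = ∞})) ^ s := by
  have habs : ∀ x : Ω, |f x / lam| = |f x| / lam := fun x => by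
    rw [abs_div, abs_of_pos hlam]
  have hpt : ∀ x : Ω, abs (|f x| ^ s / lam ^ s) = (|f x| / lam) ^ s := fun x => by
    rw [abs_of_nonneg (div_nonneg (Real.rpow_nonneg (abs_nonneg _) _)
        (Real.rpow_nonneg hlam.le _)), ← Real.div_rpow (abs_nonneg _) hlam.le]
  have hA : MeasurableSet {x : Ω | p x ≠ ∞} := (hpm (measurableSet_singleton ∞)).compl
  rw [modular]
  congr 1
  · refine setLIntegral_congr_fun hA (fun x _ => ?_)
    have hpr : (ENNReal.ofReal s * p x).toReal = s * (p x).toReal := by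
      rw [ENNReal.toReal_mul, ENNReal.toReal_ofReal hs.le]
    rw [hpt, hpr, habs, Real.rpow_mul (div_nonneg (abs_nonneg _) hlam.le)]
  · have h : (fun x => ENNReal.ofReal (abs (|f x| ^ s / lam ^ s)))
        = fun x => (ENNReal.ofReal |f x / lam|) ^ s := by
      funext x
      rw [hpt, habs, ← ENNReal.ofReal_rpow_of_nonneg (div_nonneg (abs_nonneg _) hlam.le) hs.le]
    rw [h, VL_essSup_rpow hs]

lemma VL_modular_scale {r : Ω → ℝ≥0∞} (hrm : Measurable r) (hr0 : 0 < essInf r μ) (g : Ω → ℝ)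
    (hm : modular μ r g ≤ 2) :
    modular μ r (fun x => g x / 2 ^ max (1 / (essInf r μ).toReal) 1) ≤ 1 := by
  set E := max (1 / (essInf r μ).toReal) 1 with hE
  set c := (2:ℝ) ^ E with hc
  have hE1 : (1:ℝ) ≤ E := le_max_right _ _
  have hc2 : (2:ℝ) ≤ c := by
    calc (2:ℝ) = 2 ^ (1:ℝ) := (Real.rpow_one 2).symm
    _ ≤ 2 ^ E := Real.rpow_le_rpow_of_exponent_le one_le_two hE1
  have hc0 : (0:ℝ) < c := lt_of_lt_of_le two_pos hc2
  have hA : MeasurableSet {x : Ω | r x ≠ ∞} := (hrm (measurableSet_singleton ∞)).compl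
  have hfin : (∫⁻ x in {x | r x ≠ ∞}, ENNReal.ofReal (|g x / c| ^ (r x).toReal) ∂μ)
      ≤ (∫⁻ x in {x | r x ≠ ∞}, ENNReal.ofReal (|g x| ^ (r x).toReal) ∂μ) / 2 := by
    have hae : ∀ᵐ x ∂(μ.restrict {x | r x ≠ ∞}),
        ENNReal.ofReal (|g x / c| ^ (r x).toReal)
          ≤ ENNReal.ofReal (|g x| ^ (r x).toReal) / 2 := by
      filter_upwards [ae_restrict_mem hA, ae_restrict_of_ae (ae_essInf_le (f := r) (μ := μ))]
        with x hx hx2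
      have hrtop : r x ≠ ∞ := hx
      by_cases htop : essInf r μ = ∞
      · exact absurd (top_le_iff.mp (htop ▸ hx2)) hrtop
      have hm0 : 0 < (essInf r μ).toReal := ENNReal.toReal_pos hr0.ne' htop
      have hrr : (essInf r μ).toReal ≤ (r x).toReal := ENNReal.toReal_mono hrtop hx2
      have hcrr : (2:ℝ) ≤ c ^ (r x).toReal := by
        have h1 : (1:ℝ) ≤ E * (r x).toReal := by
          calc (1:ℝ) = (1 / (essInf r μ).toReal) * (essInf r μ).toReal :=
                (one_div_mul_cancel hm0.ne').symm
          _ ≤ E * (r x).toReal :=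
              mul_le_mul (le_max_left _ _) hrr hm0.le (le_trans zero_le_one hE1)
        calc (2:ℝ) = 2 ^ (1:ℝ) := (Real.rpow_one 2).symm
        _ ≤ 2 ^ (E * (r x).toReal) := Real.rpow_le_rpow_of_exponent_le one_le_two h1
        _ = c ^ (r x).toReal := by rw [Real.rpow_mul (by norm_num : (0:ℝ) ≤ 2)]
      have hreal : |g x / c| ^ (r x).toReal ≤ |g x| ^ (r x).toReal / 2 := by
        rw [abs_div, abs_of_pos hc0, Real.div_rpow (abs_nonneg _) hc0.le]
        gcongr
      calc ENNReal.ofReal (|g x / c| ^ (r x).toReal)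
          ≤ ENNReal.ofReal (|g x| ^ (r x).toReal / 2) := ENNReal.ofReal_le_ofReal hreal
        _ = ENNReal.ofReal (|g x| ^ (r x).toReal) / 2 := by
            rw [ENNReal.ofReal_div_of_pos two_pos, ENNReal.ofReal_ofNat]
    calc (∫⁻ x in {x | r x ≠ ∞}, ENNReal.ofReal (|g x / c| ^ (r x).toReal) ∂μ)
        ≤ ∫⁻ x in {x | r x ≠ ∞}, ENNReal.ofReal (|g x| ^ (r x).toReal) / 2 ∂μ :=
          lintegral_mono_ae hae
      _ = (∫⁻ x in {x | r x ≠ ∞}, ENNReal.ofReal (|g x| ^ (r x).toReal) ∂μ) / 2 := by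
          simp_rw [div_eq_mul_inv]
          exact lintegral_mul_const' 2⁻¹ _ (by simp)
  have hinf : essSup (fun x => ENNReal.ofReal |g x / c|) (μ.restrict {x | r x = ∞})
      ≤ essSup (fun x => ENNReal.ofReal |g x|) (μ.restrict {x | r x = ∞}) / 2 := by
    refine essSup_le_of_ae_le _ ?_
    filter_upwards [ae_le_essSup (μ := μ.restrict {x | r x = ∞})
      (fun x => ENNReal.ofReal |g x|)] with x hx
    have h2c : (2:ℝ≥0∞) ≤ ENNReal.ofReal c := by
      rw [← ENNReal.ofReal_ofNat]
      exact ENNReal.ofReal_le_ofReal hc2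
    calc ENNReal.ofReal |g x / c| = ENNReal.ofReal |g x| / ENNReal.ofReal c := by
          rw [abs_div, abs_of_pos hc0, ENNReal.ofReal_div_of_pos hc0]
      _ ≤ ENNReal.ofReal |g x| / 2 := ENNReal.div_le_div_left h2c _
      _ ≤ _ := ENNReal.div_le_div_right hx 2
  calc modular μ r (fun x => g x / c)
      ≤ (∫⁻ x in {x | r x ≠ ∞}, ENNReal.ofReal (|g x| ^ (r x).toReal) ∂μ) / 2
        + essSup (fun x => ENNReal.ofReal |g x|) (μ.restrict {x | r x = ∞}) / 2 :=
        add_le_add hfin hinf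
    _ = modular μ r g / 2 := ENNReal.div_add_div_same
    _ ≤ 2 / 2 := ENNReal.div_le_div_right hm 2
    _ = 1 := by
        rw [ENNReal.div_self (by norm_num) (by norm_num)]

end Aux

/-- The s-convexification of `L^{p(·)}` coincides with `L^{sp(·)}`, with the
two-sided quasi-norm equivalence
`2^{-(1/s)max{1/p_-,1}} ‖f‖_{(L^{p(·)})^{(s)}} ≤ ‖f‖_{sp(·)}
  ≤ 2^{max{1/(sp_-),1}} ‖f‖_{(L^{p(·)})^{(s)}}`. -/
theorem convexification_eq_variable_Lebesgue {Ω : Type*} [MeasurableSpace Ω]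
    (μ : Measure Ω) (p : Ω → ℝ≥0∞) (hpm : Measurable p)
    (hp0 : 0 < essInf p μ) (s : ℝ) (hs : 0 < s) :
    (∀ f : Ω → ℝ, Measurable f →
      (memLp μ (fun x => ENNReal.ofReal s * p x) f ↔ memLp μ p (fun x => |f x| ^ s))) ∧
    (∀ f : Ω → ℝ, Measurable f → memLp μ (fun x => ENNReal.ofReal s * p x) f →
      ENNReal.ofReal ((2 : ℝ) ^ (-(1 / s) * max (1 / (essInf p μ).toReal) 1))
          * (luxNorm μ p (fun x => |f x| ^ s)) ^ (1 / s)
        ≤ luxNorm μ (fun x => ENNReal.ofReal s * p x) f ∧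
      luxNorm μ (fun x => ENNReal.ofReal s * p x) f
        ≤ ENNReal.ofReal ((2 : ℝ) ^ max (1 / (s * (essInf p μ).toReal)) 1)
            * (luxNorm μ p (fun x => |f x| ^ s)) ^ (1 / s)) := by
  have hsne : s ≠ 0 := hs.ne'
  have hqinf : essInf (fun x => ENNReal.ofReal s * p x) μ = ENNReal.ofReal s * essInf p μ :=
    VL_essInf_const_mul (ENNReal.ofReal_pos.mpr hs).ne' ENNReal.ofReal_ne_top p
  have hqr : (essInf (fun x => ENNReal.ofReal s * p x) μ).toReal = s * (essInf p μ).toReal := by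
    rw [hqinf, ENNReal.toReal_mul, ENNReal.toReal_ofReal hs.le]
  have hq0 : 0 < essInf (fun x => ENNReal.ofReal s * p x) μ := by
    rw [hqinf]; exact ENNReal.mul_pos (ENNReal.ofReal_pos.mpr hs).ne' hp0.ne'
  have hqm : Measurable fun x => ENNReal.ofReal s * p x := hpm.const_mul _
  have hc1'0 : (0:ℝ) < 2 ^ max (1 / (essInf p μ).toReal) 1 := Real.rpow_pos_of_pos two_pos _
  have hc20 : (0:ℝ) < 2 ^ max (1 / (s * (essInf p μ).toReal)) 1 := Real.rpow_pos_of_pos two_pos _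
  constructor
  · -- membership equivalence
    intro f _
    constructor
    · rintro ⟨lam, hlam, hne⟩
      rw [VL_modular_q μ p hs f lam] at hne
      refine ⟨lam ^ s, Real.rpow_pos_of_pos hlam s, ?_⟩
      show modular μ p (fun x => |f x| ^ s / lam ^ s) ≠ ∞
      rw [VL_modular_p μ hpm hs f hlam]
      exact ENNReal.add_ne_top.mpr ⟨(ENNReal.add_ne_top.mp hne).1,
        ENNReal.rpow_ne_top_of_nonneg hs.le (ENNReal.add_ne_top.mp hne).2⟩
    · rintro ⟨lam, hlam, hne⟩
      have hν0 : 0 < lam ^ (1/s) := Real.rpow_pos_of_pos hlam _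
      have hne' : modular μ p (fun x => |f x| ^ s / (lam ^ (1/s)) ^ s) ≠ ∞ := by
        rw [← Real.rpow_mul hlam.le, one_div_mul_cancel hsne, Real.rpow_one]
        exact hne
      rw [VL_modular_p μ hpm hs f hν0] at hne'
      refine ⟨lam ^ (1/s), hν0, ?_⟩
      show modular μ (fun x => ENNReal.ofReal s * p x) (fun x => f x / lam ^ (1/s)) ≠ ∞
      rw [VL_modular_q μ p hs f (lam ^ (1/s))]
      obtain ⟨h1, h2⟩ := ENNReal.add_ne_top.mp hne'
      refine ENNReal.add_ne_top.mpr ⟨h1, fun hI => h2 ?_⟩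
      rw [hI, ENNReal.top_rpow_of_pos hs]
  · -- norm inequalities
    intro f _ _
    -- step from S_q to S_p
    have stepQP : ∀ lam : ℝ≥0∞, 0 < lam → lam ≠ ∞ →
        modular μ (fun x => ENNReal.ofReal s * p x) (fun x => f x / lam.toReal) ≤ 1 →
        modular μ p (fun x => |f x| ^ s /
          (ENNReal.ofReal ((2:ℝ) ^ max (1 / (essInf p μ).toReal) 1) * lam ^ s).toReal) ≤ 1 := by
      intro lam hl0 hlt hmod
      have hL : 0 < lam.toReal := ENNReal.toReal_pos hl0.ne' hlt
      rw [VL_modular_q μ p hs f lam.toReal] at hmod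
      have hF := le_trans le_self_add hmod
      have hI := le_trans le_add_self hmod
      have h2 : modular μ p (fun x => |f x| ^ s / lam.toReal ^ s) ≤ 2 := by
        rw [VL_modular_p μ hpm hs f hL]
        calc _ ≤ 1 + 1 := add_le_add hF (ENNReal.rpow_le_one hI hs.le)
        _ = 2 := one_add_one_eq_two
      have h3 := VL_modular_scale hpm hp0 (fun x => |f x| ^ s / lam.toReal ^ s) h2
      have htr : (ENNReal.ofReal ((2:ℝ) ^ max (1 / (essInf p μ).toReal) 1) * lam ^ s).toReal
          = (2:ℝ) ^ max (1 / (essInf p μ).toReal) 1 * lam.toReal ^ s := by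
        rw [ENNReal.toReal_mul, ENNReal.toReal_ofReal hc1'0.le, ← ENNReal.toReal_rpow]
      rw [htr]
      have hfe : (fun x => |f x| ^ s /
            ((2:ℝ) ^ max (1 / (essInf p μ).toReal) 1 * lam.toReal ^ s))
          = fun x => (fun y => |f y| ^ s / lam.toReal ^ s) x
              / 2 ^ max (1 / (essInf p μ).toReal) 1 := by
        funext x
        simp only
        rw [div_div, mul_comm (lam.toReal ^ s)]
      rw [hfe]
      exact h3
    -- step from S_p to S_q
    have stepPQ : ∀ lam : ℝ≥0∞, 0 < lam → lam ≠ ∞ →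
        modular μ p (fun x => |f x| ^ s / lam.toReal) ≤ 1 →
        modular μ (fun x => ENNReal.ofReal s * p x) (fun x => f x /
          (ENNReal.ofReal ((2:ℝ) ^ max (1 / (s * (essInf p μ).toReal)) 1)
            * lam ^ (1/s)).toReal) ≤ 1 := by
      intro lam hl0 hlt hmod
      have hL : 0 < lam.toReal := ENNReal.toReal_pos hl0.ne' hlt
      have hν0 : 0 < lam.toReal ^ (1/s) := Real.rpow_pos_of_pos hL _
      have hmod' : modular μ p (fun x => |f x| ^ s / (lam.toReal ^ (1/s)) ^ s) ≤ 1 := by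
        rw [← Real.rpow_mul hL.le, one_div_mul_cancel hsne, Real.rpow_one]
        exact hmod
      rw [VL_modular_p μ hpm hs f hν0] at hmod'
      have hF := le_trans le_self_add hmod'
      have hIs := le_trans le_add_self hmod'
      have hI : essSup (fun x => ENNReal.ofReal |f x / lam.toReal ^ (1/s)|)
          (μ.restrict {x | p x = ∞}) ≤ 1 := by
        have h := ENNReal.rpow_le_rpow hIs (le_of_lt (one_div_pos.mpr hs))
        rwa [← ENNReal.rpow_mul, mul_one_div_cancel hsne, ENNReal.rpow_one,
          ENNReal.one_rpow] at h
      have h2 : modular μ (fun x => ENNReal.ofReal s * p x)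
          (fun x => f x / lam.toReal ^ (1/s)) ≤ 2 := by
        rw [VL_modular_q μ p hs f (lam.toReal ^ (1/s))]
        calc _ ≤ 1 + 1 := add_le_add hF hI
        _ = 2 := one_add_one_eq_two
      have h3 := VL_modular_scale hqm hq0 (fun x => f x / lam.toReal ^ (1/s)) h2
      rw [hqr] at h3
      have htr : (ENNReal.ofReal ((2:ℝ) ^ max (1 / (s * (essInf p μ).toReal)) 1)
            * lam ^ (1/s)).toReal
          = (2:ℝ) ^ max (1 / (s * (essInf p μ).toReal)) 1 * lam.toReal ^ (1/s) := by
        rw [ENNReal.toReal_mul, ENNReal.toReal_ofReal hc20.le, ← ENNReal.toReal_rpow]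
      rw [htr]
      have hfe : (fun x => f x /
            ((2:ℝ) ^ max (1 / (s * (essInf p μ).toReal)) 1 * lam.toReal ^ (1/s)))
          = fun x => (fun y => f y / lam.toReal ^ (1/s)) x
              / 2 ^ max (1 / (s * (essInf p μ).toReal)) 1 := by
        funext x
        simp only
        rw [div_div, mul_comm (lam.toReal ^ (1/s))]
      rw [hfe]
      exact h3
    have hK0 : ENNReal.ofReal ((2:ℝ) ^ max (1 / (s * (essInf p μ).toReal)) 1) ≠ 0 :=
      (ENNReal.ofReal_pos.mpr hc20).ne'
    have hKt : ENNReal.ofReal ((2:ℝ) ^ max (1 / (s * (essInf p μ).toReal)) 1) ≠ ∞ :=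
      ENNReal.ofReal_ne_top
    have hK0' : ENNReal.ofReal ((2:ℝ) ^ max (1 / (essInf p μ).toReal) 1) ≠ 0 :=
      (ENNReal.ofReal_pos.mpr hc1'0).ne'
    have hKt' : ENNReal.ofReal ((2:ℝ) ^ max (1 / (essInf p μ).toReal) 1) ≠ ∞ :=
      ENNReal.ofReal_ne_top
    constructor
    · -- lower bound
      refine le_sInf fun lam hl => ?_
      obtain ⟨hl0, hlt, hmod⟩ := hl
      have hmem : ENNReal.ofReal ((2:ℝ) ^ max (1 / (essInf p μ).toReal) 1) * lam ^ s
          ∈ {lam : ℝ≥0∞ | 0 < lam ∧ lam ≠ ∞ ∧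
            modular μ p (fun x => (fun y => |f y| ^ s) x / lam.toReal) ≤ 1} := by
        refine ⟨ENNReal.mul_pos hK0' (ENNReal.rpow_pos hl0 hlt).ne',
          ENNReal.mul_ne_top hKt' (ENNReal.rpow_ne_top_of_nonneg hs.le hlt), ?_⟩
        exact stepQP lam hl0 hlt hmod
      have h1 : luxNorm μ p (fun x => |f x| ^ s)
          ≤ ENNReal.ofReal ((2:ℝ) ^ max (1 / (essInf p μ).toReal) 1) * lam ^ s :=
        sInf_le hmem
      have h2 : (luxNorm μ p (fun x => |f x| ^ s)) ^ (1/s)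
          ≤ (ENNReal.ofReal ((2:ℝ) ^ max (1 / (essInf p μ).toReal) 1)) ^ (1/s) * lam := by
        have h := ENNReal.rpow_le_rpow h1 (le_of_lt (one_div_pos.mpr hs))
        rwa [ENNReal.mul_rpow_of_nonneg _ _ (le_of_lt (one_div_pos.mpr hs)),
          ← ENNReal.rpow_mul lam, mul_one_div_cancel hsne, ENNReal.rpow_one] at h
      have hmul : ENNReal.ofReal ((2 : ℝ) ^ (-(1 / s) * max (1 / (essInf p μ).toReal) 1))
          * (ENNReal.ofReal ((2:ℝ) ^ max (1 / (essInf p μ).toReal) 1)) ^ (1/s) = 1 := by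
        rw [show (-(1 / s) * max (1 / (essInf p μ).toReal) 1)
            = max (1 / (essInf p μ).toReal) 1 * (-(1/s)) from by ring,
          Real.rpow_mul (by norm_num : (0:ℝ) ≤ 2),
          ← ENNReal.ofReal_rpow_of_pos hc1'0,
          ← ENNReal.rpow_add _ _ hK0' hKt']
        norm_num
      calc ENNReal.ofReal ((2 : ℝ) ^ (-(1 / s) * max (1 / (essInf p μ).toReal) 1))
            * (luxNorm μ p (fun x => |f x| ^ s)) ^ (1 / s)
          ≤ ENNReal.ofReal ((2 : ℝ) ^ (-(1 / s) * max (1 / (essInf p μ).toReal) 1))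
            * ((ENNReal.ofReal ((2:ℝ) ^ max (1 / (essInf p μ).toReal) 1)) ^ (1/s) * lam) :=
            mul_le_mul_right h2 _
        _ = (ENNReal.ofReal ((2 : ℝ) ^ (-(1 / s) * max (1 / (essInf p μ).toReal) 1))
            * (ENNReal.ofReal ((2:ℝ) ^ max (1 / (essInf p μ).toReal) 1)) ^ (1/s)) * lam :=
            (mul_assoc _ _ _).symm
        _ = 1 * lam := by rw [hmul]
        _ = lam := one_mul lam
    · -- upper bound
      have h1 : ∀ lam : ℝ≥0∞, 0 < lam → lam ≠ ∞ →
          modular μ p (fun x => |f x| ^ s / lam.toReal) ≤ 1 →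
          luxNorm μ (fun x => ENNReal.ofReal s * p x) f
            ≤ ENNReal.ofReal ((2:ℝ) ^ max (1 / (s * (essInf p μ).toReal)) 1)
              * lam ^ (1/s) := by
        intro lam hl0 hlt hmod
        refine sInf_le ⟨ENNReal.mul_pos hK0 (ENNReal.rpow_pos hl0 hlt).ne',
          ENNReal.mul_ne_top hKt (ENNReal.rpow_ne_top_of_nonneg
            (le_of_lt (one_div_pos.mpr hs)) hlt), ?_⟩
        exact stepPQ lam hl0 hlt hmod
      have h2 : (luxNorm μ (fun x => ENNReal.ofReal s * p x) f
            / ENNReal.ofReal ((2:ℝ) ^ max (1 / (s * (essInf p μ).toReal)) 1)) ^ s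
          ≤ luxNorm μ p (fun x => |f x| ^ s) := by
        refine le_sInf fun lam hl => ?_
        obtain ⟨hl0, hlt, hmod⟩ := hl
        have := h1 lam hl0 hlt hmod
        have hdiv : luxNorm μ (fun x => ENNReal.ofReal s * p x) f
            / ENNReal.ofReal ((2:ℝ) ^ max (1 / (s * (essInf p μ).toReal)) 1) ≤ lam ^ (1/s) :=
          (ENNReal.div_le_iff_le_mul (Or.inl hK0) (Or.inl hKt)).mpr (by rwa [mul_comm])
        have h := ENNReal.rpow_le_rpow hdiv hs.le
        rwa [← ENNReal.rpow_mul lam, one_div_mul_cancel hsne, ENNReal.rpow_one] at h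
      have h3 : luxNorm μ (fun x => ENNReal.ofReal s * p x) f
          / ENNReal.ofReal ((2:ℝ) ^ max (1 / (s * (essInf p μ).toReal)) 1)
          ≤ (luxNorm μ p (fun x => |f x| ^ s)) ^ (1/s) := by
        have h := ENNReal.rpow_le_rpow h2 (le_of_lt (one_div_pos.mpr hs))
        rwa [← ENNReal.rpow_mul, mul_one_div_cancel hsne, ENNReal.rpow_one] at h
      have := (ENNReal.div_le_iff_le_mul (Or.inl hK0) (Or.inl hKt)).mp h3
      rwa [mul_comm] at this
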